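/- Let 0 < δ < 1/1000, n large, and suppose V(G) is partitioned into U_1, U_2, U_3, U_4 with |U_j| ≥ (1/4 - 4δ)n for each j, where G has minimum degree at least (3n-1)/4, and the bipartite graphs R[U_1 ∪ U_2, U_3 ∪ U_4] and B[U_1 ∪ U_3, U_2 ∪ U_4] each have maximum degree at most δn. Then in each of the bipartite graphs R[U_1, U_2], R[U_3, U_4], B[U_1, U_3], B[U_2, U_4], every vertex has deficiency at most 7δn, where the deficiency of a vertex is the size of the opposite part minus its degree. -/

import Mathlib

set_option maxHeartbeats 1000000

lemma aux_filter_mono {V : Type} [DecidableEq V] (S S' : Finset V) (p : V → Prop)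
    [DecidablePred p] (h : S ⊆ S') :
    ((S.filter p).card : ℝ) ≤ ((S'.filter p).card : ℝ) := by
  exact_mod_cast Finset.card_le_card (Finset.monotone_filter_left p h)

lemma aux_def {V : Type} [Fintype V] [DecidableEq V] (δ : ℝ) (n : ℕ)
    (G X Y : SimpleGraph V) [DecidableRel G.Adj] [DecidableRel X.Adj] [DecidableRel Y.Adj]
    (hXY : X ⊔ Y = G) (v : V) (T O : Finset V)
    (hTO : Disjoint T O) (hvT : v ∉ T) (hvO : v ∉ O)
    (hcard : Fintype.card V = n)
    (hdeg : (3 * (n:ℝ) - 1) / 4 ≤ G.degree v)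
    (hO : ((1:ℝ)/4 - 4*δ) * n ≤ O.card)
    (hXO : ((O.filter fun w => X.Adj v w).card : ℝ) ≤ δ * n)
    (hYO : ((O.filter fun w => Y.Adj v w).card : ℝ) ≤ δ * n)
    (hYT : ((T.filter fun w => Y.Adj v w).card : ℝ) ≤ δ * n) :
    ((T.filter fun w => ¬ X.Adj v w).card : ℝ) ≤ 7 * δ * n := by
  have hG : ∀ w, G.Adj v w ↔ X.Adj v w ∨ Y.Adj v w := by
    intro w; rw [← hXY]; rfl
  classical
  have h1 : (T.filter fun w => ¬ X.Adj v w) ⊆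
      (T.filter fun w => ¬ G.Adj v w) ∪ (T.filter fun w => Y.Adj v w) := by
    intro w hw
    simp only [Finset.mem_filter, Finset.mem_union] at hw ⊢
    rcases hw with ⟨hwT, hnX⟩
    by_cases hY : Y.Adj v w
    · exact Or.inr ⟨hwT, hY⟩
    · exact Or.inl ⟨hwT, fun hGa => ((hG w).1 hGa).elim hnX hY⟩
  have h1' : ((T.filter fun w => ¬ X.Adj v w).card : ℝ) ≤
      ((T.filter fun w => ¬ G.Adj v w).card : ℝ) + ((T.filter fun w => Y.Adj v w).card : ℝ) := by
    have := Finset.card_le_card h1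
    have h2 := Finset.card_union_le (T.filter fun w => ¬ G.Adj v w) (T.filter fun w => Y.Adj v w)
    exact_mod_cast le_trans this h2
  set A := T.filter fun w => ¬ G.Adj v w with hA
  set Bb := O.filter fun w => ¬ G.Adj v w with hB
  have hdisjAB : Disjoint A Bb := hTO.mono (Finset.filter_subset _ _) (Finset.filter_subset _ _)
  have hdisjN : Disjoint (A ∪ Bb) (G.neighborFinset v) := by
    rw [Finset.disjoint_left]
    intro w hw hwN
    rw [SimpleGraph.mem_neighborFinset] at hwN
    rcases Finset.mem_union.1 hw with h | h <;>
      exact (Finset.mem_filter.1 h).2 hwN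
  have hvnot : v ∉ A ∪ Bb ∪ G.neighborFinset v := by
    simp only [Finset.mem_union, SimpleGraph.mem_neighborFinset]
    rintro ((h | h) | h)
    · exact hvT (Finset.mem_filter.1 h).1
    · exact hvO (Finset.mem_filter.1 h).1
    · exact G.loopless.irrefl v h
  have hbig : A.card + Bb.card + G.degree v + 1 ≤ n := by
    have h3 : (A ∪ Bb ∪ G.neighborFinset v ∪ {v}).card ≤ n := by
      rw [← hcard]
      exact (Finset.card_le_card (Finset.subset_univ _)).trans_eq (by simp)
    have e1 : (A ∪ Bb).card = A.card + Bb.card := Finset.card_union_of_disjoint hdisjAB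
    have e2 : (A ∪ Bb ∪ G.neighborFinset v).card = (A ∪ Bb).card + G.degree v := by
      rw [Finset.card_union_of_disjoint hdisjN]; rfl
    have e3 : (A ∪ Bb ∪ G.neighborFinset v ∪ {v}).card
        = (A ∪ Bb ∪ G.neighborFinset v).card + 1 := by
      rw [Finset.card_union_of_disjoint (Finset.disjoint_singleton_right.2 hvnot)]
      simp
    omega
  have hsplit : (O.filter fun w => G.Adj v w).card + Bb.card = O.card := by
    simpa using Finset.card_filter_add_card_filter_not (s := O)
      (p := fun w => G.Adj v w)
  have hGsub : (O.filter fun w => G.Adj v w) ⊆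
      (O.filter fun w => X.Adj v w) ∪ (O.filter fun w => Y.Adj v w) := by
    intro w hw
    simp only [Finset.mem_filter, Finset.mem_union] at hw ⊢
    rcases hw with ⟨hwO, hGa⟩
    exact ((hG w).1 hGa).imp (fun h => ⟨hwO, h⟩) (fun h => ⟨hwO, h⟩)
  have hGcard : ((O.filter fun w => G.Adj v w).card : ℝ) ≤ 2 * δ * n := by
    have h4 := (Finset.card_le_card hGsub).trans (Finset.card_union_le _ _)
    have h5 : ((O.filter fun w => G.Adj v w).card : ℝ) ≤
        ((O.filter fun w => X.Adj v w).card : ℝ) + ((O.filter fun w => Y.Adj v w).card : ℝ) := by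
      exact_mod_cast h4
    linarith
  have hBb : (O.card : ℝ) - 2 * δ * n ≤ (Bb.card : ℝ) := by
    have h6 : ((O.filter fun w => G.Adj v w).card : ℝ) + (Bb.card : ℝ) = O.card := by
      exact_mod_cast hsplit
    linarith
  have hbigR : (A.card : ℝ) + (Bb.card : ℝ) + (G.degree v : ℝ) + 1 ≤ n := by exact_mod_cast hbig
  have : (A.card : ℝ) ≤ 6 * δ * n - 3/4 := by linarith
  linarith

theorem stmt18 (δ : ℝ) (hδ0 : 0 < δ) (hδ1 : δ < 1 / 1000) :
    ∃ n₀ : ℕ, ∀ n : ℕ, n₀ ≤ n →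
    ∀ (V : Type) [Fintype V] [DecidableEq V]
      (G R B : SimpleGraph V)
      [DecidableRel G.Adj] [DecidableRel R.Adj] [DecidableRel B.Adj],
      Fintype.card V = n →
      -- minimum degree at least (3n - 1)/4
      (∀ v : V, (3 * (n : ℝ) - 1) / 4 ≤ G.degree v) →
      -- 2-edge-coloring (colors may overlap)
      R ⊔ B = G →
      ∀ U1 U2 U3 U4 : Finset V,
        ([U1, U2, U3, U4] : List (Finset V)).Pairwise Disjoint →
        U1 ∪ U2 ∪ U3 ∪ U4 = (Finset.univ : Finset V) →
        -- |U_j| ≥ (1/4 - 4δ)n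
        ((1 : ℝ) / 4 - 4 * δ) * n ≤ U1.card →
        ((1 : ℝ) / 4 - 4 * δ) * n ≤ U2.card →
        ((1 : ℝ) / 4 - 4 * δ) * n ≤ U3.card →
        ((1 : ℝ) / 4 - 4 * δ) * n ≤ U4.card →
        -- Δ(R[U1 ∪ U2, U3 ∪ U4]) ≤ δn
        (∀ v ∈ U1 ∪ U2, (((U3 ∪ U4).filter fun w => R.Adj v w).card : ℝ) ≤ δ * n) →
        (∀ v ∈ U3 ∪ U4, (((U1 ∪ U2).filter fun w => R.Adj v w).card : ℝ) ≤ δ * n) →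
        -- Δ(B[U1 ∪ U3, U2 ∪ U4]) ≤ δn
        (∀ v ∈ U1 ∪ U3, (((U2 ∪ U4).filter fun w => B.Adj v w).card : ℝ) ≤ δ * n) →
        (∀ v ∈ U2 ∪ U4, (((U1 ∪ U3).filter fun w => B.Adj v w).card : ℝ) ≤ δ * n) →
        -- conclusion: every vertex has deficiency at most 7δn in each of
        -- R[U1, U2], R[U3, U4], B[U1, U3], B[U2, U4]
        ((∀ v ∈ U1, ((U2.filter fun w => ¬ R.Adj v w).card : ℝ) ≤ 7 * δ * n) ∧
         (∀ v ∈ U2, ((U1.filter fun w => ¬ R.Adj v w).card : ℝ) ≤ 7 * δ * n) ∧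
         (∀ v ∈ U3, ((U4.filter fun w => ¬ R.Adj v w).card : ℝ) ≤ 7 * δ * n) ∧
         (∀ v ∈ U4, ((U3.filter fun w => ¬ R.Adj v w).card : ℝ) ≤ 7 * δ * n) ∧
         (∀ v ∈ U1, ((U3.filter fun w => ¬ B.Adj v w).card : ℝ) ≤ 7 * δ * n) ∧
         (∀ v ∈ U3, ((U1.filter fun w => ¬ B.Adj v w).card : ℝ) ≤ 7 * δ * n) ∧
         (∀ v ∈ U2, ((U4.filter fun w => ¬ B.Adj v w).card : ℝ) ≤ 7 * δ * n) ∧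
         (∀ v ∈ U4, ((U2.filter fun w => ¬ B.Adj v w).card : ℝ) ≤ 7 * δ * n)) := by
  refine ⟨0, ?_⟩
  intro n _ V _ _ G R B _ _ _ hcard hdeg hRB U1 U2 U3 U4 hdisj hcover hU1 hU2 hU3 hU4
    hR1 hR2 hB1 hB2
  have hBR : B ⊔ R = G := by rw [sup_comm]; exact hRB
  simp only [List.pairwise_cons, List.mem_cons, List.not_mem_nil, or_false,
    List.mem_singleton, List.Pairwise.nil, and_true] at hdisj
  obtain ⟨h1, h2, h3⟩ := hdisj
  have h12 : Disjoint U1 U2 := h1 U2 (by simp)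
  have h13 : Disjoint U1 U3 := h1 U3 (by simp)
  have h14 : Disjoint U1 U4 := h1 U4 (by simp)
  have h23 : Disjoint U2 U3 := h2 U3 (by simp)
  have h24 : Disjoint U2 U4 := h2 U4 (by simp)
  have h34 : Disjoint U3 U4 := h3.1 U4 rfl
  refine ⟨?_, ?_, ?_, ?_, ?_, ?_, ?_, ?_⟩
  · intro v hv
    exact aux_def δ n G R B hRB v U2 U4 h24
      (Finset.disjoint_left.1 h12 hv) (Finset.disjoint_left.1 h14 hv) hcard (hdeg v) hU4
      ((aux_filter_mono _ _ _ Finset.subset_union_right).trans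
        (hR1 v (Finset.mem_union_left _ hv)))
      ((aux_filter_mono _ _ _ Finset.subset_union_right).trans
        (hB1 v (Finset.mem_union_left _ hv)))
      ((aux_filter_mono _ _ _ Finset.subset_union_left).trans
        (hB1 v (Finset.mem_union_left _ hv)))
  · intro v hv
    exact aux_def δ n G R B hRB v U1 U3 h13
      (Finset.disjoint_right.1 h12 hv) (Finset.disjoint_left.1 h23 hv) hcard (hdeg v) hU3
      ((aux_filter_mono _ _ _ Finset.subset_union_left).trans
        (hR1 v (Finset.mem_union_right _ hv)))
      ((aux_filter_mono _ _ _ Finset.subset_union_right).trans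
        (hB2 v (Finset.mem_union_left _ hv)))
      ((aux_filter_mono _ _ _ Finset.subset_union_left).trans
        (hB2 v (Finset.mem_union_left _ hv)))
  · intro v hv
    exact aux_def δ n G R B hRB v U4 U2 h24.symm
      (Finset.disjoint_left.1 h34 hv) (Finset.disjoint_right.1 h23 hv) hcard (hdeg v) hU2
      ((aux_filter_mono _ _ _ Finset.subset_union_right).trans
        (hR2 v (Finset.mem_union_left _ hv)))
      ((aux_filter_mono _ _ _ Finset.subset_union_left).trans
        (hB1 v (Finset.mem_union_right _ hv)))
      ((aux_filter_mono _ _ _ Finset.subset_union_right).trans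
        (hB1 v (Finset.mem_union_right _ hv)))
  · intro v hv
    exact aux_def δ n G R B hRB v U3 U1 h13.symm
      (Finset.disjoint_right.1 h34 hv) (Finset.disjoint_right.1 h14 hv) hcard (hdeg v) hU1
      ((aux_filter_mono _ _ _ Finset.subset_union_left).trans
        (hR2 v (Finset.mem_union_right _ hv)))
      ((aux_filter_mono _ _ _ Finset.subset_union_left).trans
        (hB2 v (Finset.mem_union_right _ hv)))
      ((aux_filter_mono _ _ _ Finset.subset_union_right).trans
        (hB2 v (Finset.mem_union_right _ hv)))
  · intro v hv
    exact aux_def δ n G B R hBR v U3 U4 h34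
      (Finset.disjoint_left.1 h13 hv) (Finset.disjoint_left.1 h14 hv) hcard (hdeg v) hU4
      ((aux_filter_mono _ _ _ Finset.subset_union_right).trans
        (hB1 v (Finset.mem_union_left _ hv)))
      ((aux_filter_mono _ _ _ Finset.subset_union_right).trans
        (hR1 v (Finset.mem_union_left _ hv)))
      ((aux_filter_mono _ _ _ Finset.subset_union_left).trans
        (hR1 v (Finset.mem_union_left _ hv)))
  · intro v hv
    exact aux_def δ n G B R hBR v U1 U2 h12
      (Finset.disjoint_right.1 h13 hv) (Finset.disjoint_right.1 h23 hv) hcard (hdeg v) hU2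
      ((aux_filter_mono _ _ _ Finset.subset_union_left).trans
        (hB1 v (Finset.mem_union_right _ hv)))
      ((aux_filter_mono _ _ _ Finset.subset_union_right).trans
        (hR2 v (Finset.mem_union_left _ hv)))
      ((aux_filter_mono _ _ _ Finset.subset_union_left).trans
        (hR2 v (Finset.mem_union_left _ hv)))
  · intro v hv
    exact aux_def δ n G B R hBR v U4 U3 h34.symm
      (Finset.disjoint_left.1 h24 hv) (Finset.disjoint_left.1 h23 hv) hcard (hdeg v) hU3
      ((aux_filter_mono _ _ _ Finset.subset_union_right).trans
        (hB2 v (Finset.mem_union_left _ hv)))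
      ((aux_filter_mono _ _ _ Finset.subset_union_left).trans
        (hR1 v (Finset.mem_union_right _ hv)))
      ((aux_filter_mono _ _ _ Finset.subset_union_right).trans
        (hR1 v (Finset.mem_union_right _ hv)))
  · intro v hv
    exact aux_def δ n G B R hBR v U2 U1 h12.symm
      (Finset.disjoint_right.1 h24 hv) (Finset.disjoint_right.1 h14 hv) hcard (hdeg v) hU1
      ((aux_filter_mono _ _ _ Finset.subset_union_left).trans
        (hB2 v (Finset.mem_union_right _ hv)))
      ((aux_filter_mono _ _ _ Finset.subset_union_left).trans
        (hR2 v (Finset.mem_union_right _ hv)))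
      ((aux_filter_mono _ _ _ Finset.subset_union_right).trans
        (hR2 v (Finset.mem_union_right _ hv)))
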